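/- Let β ∈ [0,1), γ ≥ 0, η > 0, and g : ℕ → ℝ^d. With m₀ = 0, m_t = β m_{t-1} + g_t, w_{t+1} = w_t - γ g_t - η m_t, and y defined by y₁ = w₁, y_k = (1/(1-β)) w_k - (β/(1-β)) w_{k-1} + (βγ/(1-β)) g_{k-1} for k ≥ 2, we have for all k ≥ 1: ‖y_k - w_k‖² ≤ (β²η²/(1-β)³) Σ_{j=1}^{k-1} β^{k-1-j} ‖g_j‖². -/

import Mathlib

theorem aux_dist_bound (d : ℕ) (β γ η : ℝ)
    (hβ0 : 0 ≤ β) (hβ1 : β < 1) (hγ : 0 ≤ γ) (hη : 0 < η)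
    (g m w y : ℕ → EuclideanSpace ℝ (Fin d))
    (hm0 : m 0 = 0)
    (hm : ∀ t : ℕ, 1 ≤ t → m t = β • m (t - 1) + g t)
    (hw : ∀ t : ℕ, 1 ≤ t → w (t + 1) = w t - γ • g t - η • m t)
    (hy1 : y 1 = w 1)
    (hy : ∀ k : ℕ, 2 ≤ k →
      y k = (1 / (1 - β)) • w k - (β / (1 - β)) • w (k - 1)
            + (β * γ / (1 - β)) • g (k - 1)) :
    ∀ k : ℕ, 1 ≤ k →
      ‖y k - w k‖ ^ 2 ≤
        (β ^ 2 * η ^ 2 / (1 - β) ^ 3) *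
          ∑ j ∈ Finset.Icc 1 (k - 1), β ^ (k - 1 - j) * ‖g j‖ ^ 2 := by
  have hb : (0:ℝ) < 1 - β := by linarith
  have hbne : (1:ℝ) - β ≠ 0 := ne_of_gt hb
  -- closed form for m
  have hmform : ∀ t : ℕ, m t = ∑ j ∈ Finset.Icc 1 t, β ^ (t - j) • g j := by
    intro t
    induction t with
    | zero => simp [hm0]
    | succ n ih =>
      have h1 : m (n + 1) = β • m n + g (n + 1) := by
        simpa using hm (n + 1) (Nat.le_add_left 1 n)
      rw [h1, ih, Finset.smul_sum]
      rw [Finset.sum_Icc_succ_top (Nat.le_add_left 1 n)]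
      have : ∀ j ∈ Finset.Icc 1 n, β • β ^ (n - j) • g j = β ^ (n + 1 - j) • g j := by
        intro j hj
        rw [Finset.mem_Icc] at hj
        rw [smul_smul, ← pow_succ']
        congr 2
        omega
      rw [Finset.sum_congr rfl this]
      simp
  -- key identity
  have hkey : ∀ k : ℕ, 1 ≤ k → y k - w k = -((β * η / (1 - β)) • m (k - 1)) := by
    intro k hk
    rcases eq_or_lt_of_le hk with h | h
    · simp [← h, hy1, hm0]
    · obtain ⟨t, rfl⟩ : ∃ t, k = t + 1 := ⟨k - 1, by omega⟩
      have ht : 1 ≤ t := by omega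
      have h2 : 2 ≤ t + 1 := by omega
      have hyk := hy (t + 1) h2
      simp only [Nat.add_sub_cancel] at hyk ⊢
      rw [hyk, hw t ht]
      match_scalars <;> field_simp <;> ring
  intro k hk
  -- sum of weights bound
  have hS1 : ∀ n : ℕ, ∑ j ∈ Finset.Icc 1 n, β ^ (n - j) ≤ 1 / (1 - β) := by
    intro n
    induction n with
    | zero =>
        simp only [Nat.zero_eq, Finset.Icc_eq_empty_of_lt Nat.zero_lt_one, Finset.sum_empty]
        exact div_nonneg zero_le_one hb.le
    | succ n ih =>
      rw [Finset.sum_Icc_succ_top (Nat.le_add_left 1 n)]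
      have : ∀ j ∈ Finset.Icc 1 n, β ^ (n + 1 - j) = β * β ^ (n - j) := by
        intro j hj
        rw [Finset.mem_Icc] at hj
        rw [← pow_succ']
        congr 1
        omega
      rw [Finset.sum_congr rfl this, ← Finset.mul_sum]
      simp only [Nat.sub_self, pow_zero]
      have : β * ∑ j ∈ Finset.Icc 1 n, β ^ (n - j) ≤ β * (1 / (1 - β)) := by
        apply mul_le_mul_of_nonneg_left ih hβ0
      have heq : β * (1 / (1 - β)) + 1 = 1 / (1 - β) := by field_simp; ring
      linarith
  -- norm of m bound
  set n := k - 1 with hn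
  have hnormm : ‖m n‖ ≤ ∑ j ∈ Finset.Icc 1 n, β ^ (n - j) * ‖g j‖ := by
    rw [hmform n]
    refine (norm_sum_le _ _).trans_eq ?_
    apply Finset.sum_congr rfl
    intro j _
    rw [norm_smul, Real.norm_eq_abs, abs_of_nonneg (pow_nonneg hβ0 _)]
  -- Cauchy-Schwarz
  have hCS : (∑ j ∈ Finset.Icc 1 n, β ^ (n - j) * ‖g j‖) ^ 2 ≤
      (∑ j ∈ Finset.Icc 1 n, β ^ (n - j)) *
      ∑ j ∈ Finset.Icc 1 n, β ^ (n - j) * ‖g j‖ ^ 2 := by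
    have := Finset.sum_mul_sq_le_sq_mul_sq (Finset.Icc 1 n)
      (fun j => Real.sqrt (β ^ (n - j))) (fun j => Real.sqrt (β ^ (n - j)) * ‖g j‖)
    have e1 : ∀ j ∈ Finset.Icc 1 n,
        Real.sqrt (β ^ (n - j)) * (Real.sqrt (β ^ (n - j)) * ‖g j‖) = β ^ (n - j) * ‖g j‖ := by
      intro j _
      rw [← mul_assoc, Real.mul_self_sqrt (pow_nonneg hβ0 _)]
    have e2 : ∀ j ∈ Finset.Icc 1 n, Real.sqrt (β ^ (n - j)) ^ 2 = β ^ (n - j) := by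
      intro j _
      exact Real.sq_sqrt (pow_nonneg hβ0 _)
    have e3 : ∀ j ∈ Finset.Icc 1 n,
        (Real.sqrt (β ^ (n - j)) * ‖g j‖) ^ 2 = β ^ (n - j) * ‖g j‖ ^ 2 := by
      intro j _
      rw [mul_pow, Real.sq_sqrt (pow_nonneg hβ0 _)]
    rwa [Finset.sum_congr rfl e1, Finset.sum_congr rfl e2, Finset.sum_congr rfl e3] at this
  have hS2nn : 0 ≤ ∑ j ∈ Finset.Icc 1 n, β ^ (n - j) * ‖g j‖ ^ 2 := by
    apply Finset.sum_nonneg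
    intro j _
    positivity
  have hmsq : ‖m n‖ ^ 2 ≤ (1 / (1 - β)) * ∑ j ∈ Finset.Icc 1 n, β ^ (n - j) * ‖g j‖ ^ 2 := by
    calc ‖m n‖ ^ 2 ≤ (∑ j ∈ Finset.Icc 1 n, β ^ (n - j) * ‖g j‖) ^ 2 := by
          apply pow_le_pow_left₀ (norm_nonneg _) hnormm
      _ ≤ (∑ j ∈ Finset.Icc 1 n, β ^ (n - j)) *
          ∑ j ∈ Finset.Icc 1 n, β ^ (n - j) * ‖g j‖ ^ 2 := hCS
      _ ≤ (1 / (1 - β)) * ∑ j ∈ Finset.Icc 1 n, β ^ (n - j) * ‖g j‖ ^ 2 := by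
          apply mul_le_mul_of_nonneg_right (hS1 n) hS2nn
  -- conclude
  rw [hkey k hk, norm_neg, norm_smul, Real.norm_eq_abs,
    abs_of_nonneg (by positivity : (0:ℝ) ≤ β * η / (1 - β)), mul_pow]
  calc (β * η / (1 - β)) ^ 2 * ‖m n‖ ^ 2
      ≤ (β * η / (1 - β)) ^ 2 *
        ((1 / (1 - β)) * ∑ j ∈ Finset.Icc 1 n, β ^ (n - j) * ‖g j‖ ^ 2) := by
        apply mul_le_mul_of_nonneg_left hmsq (by positivity)
    _ = (β ^ 2 * η ^ 2 / (1 - β) ^ 3) * ∑ j ∈ Finset.Icc 1 n, β ^ (n - j) * ‖g j‖ ^ 2 := by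
        field_simp
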